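/- Define readability without causal arbitration, A ⪯' B, by quantifying over arbitrary strict linear orders: for every finite labeled causal DAG (M, E, obj, sess) and every strict linear order ≺ on M (not required to refine E), every A-admissible cut w.r.t. (E, ≺) is B-admissible w.r.t. (E, ≺). Then ⪯' is exactly the product order: A ⪯' B if and only if O_A ≥ O_B in the chain trivial < object < all, and for every finite labeled causal DAG and every message m, deps_{C_B}(m) ⊆ deps_{C_A}(m). In particular, without causal arbitration the cross-axis κ-shortcuts vanish and all 12 configurations (C, O) are pairwise ⪯'-inequivalent. -/

import Mathlib

/-- Closure scopes. -/
inductive CScope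
  | none | object | session | explicit
deriving DecidableEq

/-- Ordering scopes. -/
inductive OScope
  | trivial | object | all
deriving DecidableEq

/-- A finite labeled causal DAG: a finite type of messages with an irreflexive
acyclic edge relation and object/session labels. -/
structure LDag where
  M : Type
  [fin : Fintype M]
  O0 : Type
  S0 : Type
  E : M → M → Prop
  irr : Irreflexive E
  acyc : Irreflexive (Relation.TransGen E)
  obj : M → O0
  sess : M → S0

/-- The closure filters `deps_C`. -/
def LDag.deps (G : LDag) : CScope → G.M → Set G.M
  | .none, _ => ∅
  | .object, m => {m' | G.E m' m ∧ G.obj m' = G.obj m}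
  | .session, m => {m' | G.E m' m ∧ G.sess m' = G.sess m}
  | .explicit, m => {m' | G.E m' m}

/-- Same-class relation of an ordering scope. -/
def LDag.sameClass (G : LDag) : OScope → G.M → G.M → Prop
  | .trivial, a, b => a = b
  | .object, a, b => G.obj a = G.obj b
  | .all, _, _ => True

/-- `V` is closed under the filter `deps_C`. -/
def LDag.closedUnder (G : LDag) (C : CScope) (V : Set G.M) : Prop :=
  ∀ m ∈ V, G.deps C m ⊆ V

/-- `V` is a per-class prefix for the ordering scope `O` w.r.t. `prec`. -/
def LDag.isPrefix (G : LDag) (O : OScope) (prec : G.M → G.M → Prop) (V : Set G.M) : Prop :=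
  ∀ m ∈ V, ∀ m', G.sameClass O m' m → prec m' m → m' ∈ V

/-- A cut `V` is admissible under the configuration `(C, O)` w.r.t. `(E, prec)`. -/
def LDag.admissible (G : LDag) (prec : G.M → G.M → Prop) (C : CScope) (O : OScope)
    (V : Set G.M) : Prop :=
  G.closedUnder C V ∧ G.isPrefix O prec V

/-- `prec` refines the causal order (causal arbitration). -/
def LDag.refines (G : LDag) (prec : G.M → G.M → Prop) : Prop :=
  ∀ m' m, G.E m' m → prec m' m

/-- A configuration is a pair of a closure scope and an ordering scope. -/
abbrev Config := CScope × OScope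

/-- Readability under causal arbitration: every `A`-admissible cut is
`B`-admissible, on every finite labeled causal DAG and every strict linear
order refining the causal edges. -/
def Readable (A B : Config) : Prop :=
  ∀ G : LDag, ∀ prec : G.M → G.M → Prop,
    IsStrictTotalOrder G.M prec → G.refines prec →
    ∀ V : Set G.M, G.admissible prec A.1 A.2 V → G.admissible prec B.1 B.2 V

/-- The chain `trivial < object < all` on ordering scopes, as a rank. -/
def OScope.rank : OScope → ℕ
  | .trivial => 0
  | .object => 1
  | .all => 2

/-- The κ map: the closure entailed by an ordering scope. -/
def kappa : OScope → CScope
  | .trivial => .none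
  | .object => .object
  | .all => .explicit

/-- Readability *without* causal arbitration: quantify over arbitrary strict
linear orders on the messages, not required to refine the causal edges. -/
def Readable' (A B : Config) : Prop :=
  ∀ G : LDag, ∀ prec : G.M → G.M → Prop,
    IsStrictTotalOrder G.M prec →
    ∀ V : Set G.M, G.admissible prec A.1 A.2 V → G.admissible prec B.1 B.2 V

section Aux

/-- Two-element DAG with a single edge `false → true` and prescribed labels. -/
def pairDag (O0 S0 : Type) (o0 o1 : O0) (s0 s1 : S0) : LDag where
  M := Bool
  O0 := O0
  S0 := S0
  E a b := a = false ∧ b = true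
  irr := by
    rintro a ⟨h1, h2⟩
    rw [h1] at h2
    exact Bool.noConfusion h2
  acyc := by
    have key : ∀ a b : Bool,
        Relation.TransGen (fun x y : Bool => x = false ∧ y = true) a b →
          a = false ∧ b = true := by
      intro a b h
      induction h with
      | single h => exact h
      | tail _ h ih => exact ⟨ih.1, h.2⟩
    intro a h
    have h2 := key a a h
    rw [h2.1] at h2
    exact Bool.noConfusion h2.2
  obj b := cond b o1 o0
  sess b := cond b s1 s0

abbrev precPair : Bool → Bool → Prop := fun a b => a = true ∧ b = false

lemma stoPair : IsStrictTotalOrder Bool precPair where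
  trichotomous := by decide
  irrefl := by decide
  trans := by decide

lemma mem_deps_pair (O0 S0 : Type) (o0 o1 : O0) (s0 s1 : S0) (C : CScope) :
    false ∈ (pairDag O0 S0 o0 o1 s0 s1).deps C true ↔
      (C = .object ∧ o0 = o1) ∨ (C = .session ∧ s0 = s1) ∨ C = .explicit := by
  cases C
  · change False ↔ _; simp
  · change ((false = false ∧ true = true) ∧ o0 = o1) ↔ _; simp
  · change ((false = false ∧ true = true) ∧ s0 = s1) ↔ _; simp
  · change (false = false ∧ true = true) ↔ _; simp

lemma not_readable'_deps (A B : Config) (G : LDag) (x m : G.M)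
    (hx : x ∈ G.deps B.1 m) (hx' : x ∉ G.deps A.1 m) : ¬ Readable' A B := by
  intro h
  have hE : G.E x m := by
    cases hB : B.1 <;> rw [hB] at hx
    · exact hx.elim
    · exact hx.1
    · exact hx.1
    · exact hx
  have hmemB : false ∈ (pairDag G.O0 G.S0 (G.obj x) (G.obj m) (G.sess x) (G.sess m)).deps B.1 true := by
    rw [mem_deps_pair]
    cases hB : B.1 <;> rw [hB] at hx
    · exact hx.elim
    · exact Or.inl ⟨rfl, hx.2⟩
    · exact Or.inr (Or.inl ⟨rfl, hx.2⟩)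
    · exact Or.inr (Or.inr rfl)
  have hmemA : false ∉ (pairDag G.O0 G.S0 (G.obj x) (G.obj m) (G.sess x) (G.sess m)).deps A.1 true := by
    rw [mem_deps_pair]
    rintro (⟨hA, ho⟩ | ⟨hA, hs⟩ | hA) <;> apply hx'
    · rw [hA]; exact ⟨hE, ho⟩
    · rw [hA]; exact ⟨hE, hs⟩
    · rw [hA]; exact hE
  have hadm : (pairDag G.O0 G.S0 (G.obj x) (G.obj m) (G.sess x) (G.sess m)).admissible
      precPair A.1 A.2 {b | b = true} := by
    constructor
    · intro m' hm' y hy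
      cases y with
      | true => rfl
      | false =>
        exact absurd (by rwa [show m' = true from hm'] at hy) hmemA
    · intro m' hm' m'' _ hprec
      rw [show m' = true from hm'] at hprec
      exact absurd hprec.2 Bool.noConfusion
  obtain ⟨hcl, _⟩ := h (pairDag G.O0 G.S0 (G.obj x) (G.obj m) (G.sess x) (G.sess m)) precPair stoPair {b | b = true} hadm
  have : (false : Bool) = true := hcl true rfl hmemB
  exact Bool.noConfusion this

/-- Two-element DAG with no edges. -/
def flatDag (o : Bool → Bool) : LDag where
  M := Bool
  O0 := Bool
  S0 := Bool
  E _ _ := False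
  irr := fun _ h => h
  acyc := by
    have key : ∀ a b : Bool, Relation.TransGen (fun _ _ : Bool => False) a b → False := by
      intro a b h
      induction h with
      | single h => exact h
      | tail _ h _ => exact h
    exact fun a h => key a a h
  obj := o
  sess _ := true

abbrev precFlat : Bool → Bool → Prop := fun a b => a = false ∧ b = true

lemma stoFlat : IsStrictTotalOrder Bool precFlat where
  trichotomous := by decide
  irrefl := by decide
  trans := by decide

lemma flat_closed (o : Bool → Bool) (C : CScope) (V : Set Bool) :
    (flatDag o).closedUnder C V := by
  intro m _ y hy
  cases C
  · exact hy.elim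
  · exact hy.1.elim
  · exact hy.1.elim
  · exact hy.elim

lemma not_readable'_rank (A B : Config) (h : A.2.rank < B.2.rank) : ¬ Readable' A B := by
  obtain ⟨CA, OA⟩ := A
  obtain ⟨CB, OB⟩ := B
  simp only at h ⊢
  intro hr
  set o : Bool → Bool := if OA = .object then id else fun _ => true with ho
  have hadm : (flatDag o).admissible precFlat CA OA {b | b = true} := by
    refine ⟨flat_closed o CA _, ?_⟩
    intro m' hm' m'' hsc hp
    rw [show m' = true from hm'] at hp hsc
    cases hOA : OA
    · rw [hOA] at hsc
      exact hsc
    · rw [hOA] at hsc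
      have : o m'' = o true := hsc
      rw [ho] at this
      simp [hOA] at this
      exact this
    · rw [hOA] at h
      cases OB <;> simp [OScope.rank] at h
  obtain ⟨_, hpre⟩ := hr (flatDag o) precFlat stoFlat _ hadm
  have hfalse : (false : Bool) ∈ {b : Bool | b = true} := by
    apply hpre true rfl false _ ⟨rfl, rfl⟩
    cases hOB : OB
    · rw [hOB] at h
      cases OA <;> simp [OScope.rank] at h
    · have hOA : OA = .trivial := by
        rw [hOB] at h
        cases OA <;> simp [OScope.rank] at h <;> rfl
      show (flatDag o).obj false = (flatDag o).obj true
      show o false = o true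
      rw [ho]
      simp [hOA]
    · trivial
  exact Bool.noConfusion hfalse

lemma readable'_of (A B : Config) (hrank : B.2.rank ≤ A.2.rank)
    (hdeps : ∀ G : LDag, ∀ m : G.M, G.deps B.1 m ⊆ G.deps A.1 m) : Readable' A B := by
  obtain ⟨CA, OA⟩ := A
  obtain ⟨CB, OB⟩ := B
  simp only at hrank hdeps
  rintro G prec _ V ⟨hcl, hpre⟩
  refine ⟨fun m hm => (hdeps G m).trans (hcl m hm), ?_⟩
  intro m hm m' hsc hp
  refine hpre m hm m' ?_ hp
  cases hOA : OA
  · have hOB : OB = .trivial := by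
      rw [hOA] at hrank
      cases OB <;> simp [OScope.rank] at hrank <;> rfl
    rw [hOB] at hsc
    exact hsc
  · rw [hOA] at hrank
    cases hOB : OB <;> rw [hOB] at hsc
    · exact congrArg G.obj hsc
    · exact hsc
    · rw [hOB] at hrank
      simp [OScope.rank] at hrank
  · trivial

lemma oscope_rank_inj : ∀ a b : OScope, a.rank = b.rank → a = b := by
  intro a b h
  cases a <;> cases b <;> first | rfl | simp [OScope.rank] at h

lemma cscope_eq (a b : CScope)
    (h1 : ∀ G : LDag, ∀ m : G.M, G.deps b m ⊆ G.deps a m)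
    (h2 : ∀ G : LDag, ∀ m : G.M, G.deps a m ⊆ G.deps b m) : a = b := by
  have key : ∀ o0 o1 s0 s1 : Bool,
      (false ∈ (pairDag Bool Bool o0 o1 s0 s1).deps a true ↔
        false ∈ (pairDag Bool Bool o0 o1 s0 s1).deps b true) :=
    fun o0 o1 s0 s1 => ⟨fun hh => h2 (pairDag Bool Bool o0 o1 s0 s1) true hh,
      fun hh => h1 (pairDag Bool Bool o0 o1 s0 s1) true hh⟩
  have k1 := key true true true true
  have k2 := key false true true true
  have k3 := key true true false true
  rw [mem_deps_pair, mem_deps_pair] at k1 k2 k3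
  cases a <;> cases b <;> simp_all

end Aux

/-- **Factoring without causal arbitration.** Without causal
arbitration, readability is exactly the product order, and all 12
configurations are pairwise inequivalent. -/

theorem readability_without_arbitration_factors :
    (∀ A B : Config,
      Readable' A B ↔
        (B.2.rank ≤ A.2.rank ∧
          ∀ G : LDag, ∀ m : G.M, G.deps B.1 m ⊆ G.deps A.1 m)) ∧
    (∀ A B : Config, Readable' A B → Readable' B A → A = B) := by
  have main : ∀ A B : Config,
      Readable' A B ↔
        (B.2.rank ≤ A.2.rank ∧
          ∀ G : LDag, ∀ m : G.M, G.deps B.1 m ⊆ G.deps A.1 m) := by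
    intro A B
    constructor
    · intro h
      refine ⟨?_, ?_⟩
      · by_contra hrank
        exact not_readable'_rank A B (by omega) h
      · intro G m x hx
        by_contra hx'
        exact (not_readable'_deps A B G x m hx hx') h
    · rintro ⟨h1, h2⟩
      exact readable'_of A B h1 h2
  refine ⟨main, ?_⟩
  intro A B h1 h2
  rw [main] at h1 h2
  obtain ⟨CA, OA⟩ := A
  obtain ⟨CB, OB⟩ := B
  have hO : OA = OB := oscope_rank_inj _ _ (le_antisymm h2.1 h1.1)
  have hC : CA = CB := cscope_eq CA CB h1.2 h2.2
  rw [hO, hC]
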